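/- Let 𝒢 be an abelian category with generator G, and let X be a chain complex in Ch(𝒢). If every chain map Sⁿ(G) → X extends along the canonical inclusion Sⁿ(G) → D^{n+1}(G) for all n, then X is exact (acyclic). -/

import Mathlib

open CategoryTheory Limits

universe v u

/-- Let `𝒢` be an abelian category with generator `G`, and `X` a chain
complex in `Ch(𝒢)`.  A chain map `Sⁿ(G) ⟶ X` is the same as a morphism `f : G ⟶ Xₙ` with
`f ≫ d = 0`, and an extension of it along the inclusion `Sⁿ(G) ⟶ D^{n+1}(G)` is the same
as a morphism `g : G ⟶ X_{n+1}` with `g ≫ d = f`.  If every chain map `Sⁿ(G) ⟶ X`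
extends along `Sⁿ(G) ⟶ D^{n+1}(G)` (for all `n`), then `X` is exact. -/
theorem stmt6 {𝒢 : Type u} [Category.{v} 𝒢] [Abelian 𝒢] (G : 𝒢)
    (hG : IsSeparator G) (X : ChainComplex 𝒢 ℤ)
    (hext : ∀ (n : ℤ) (f : G ⟶ X.X n), f ≫ X.d n (n - 1) = 0 →
      ∃ g : G ⟶ X.X (n + 1), g ≫ X.d (n + 1) n = f) :
    ∀ n : ℤ, X.ExactAt n := by
  intro n
  rw [X.exactAt_iff' (n + 1) n (n - 1) (by simp) (by simp)]
  set S := X.sc' (n + 1) n (n - 1) with hS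
  rw [S.exact_iff_epi_toCycles]
  constructor
  intro Z h k hhk
  rw [← sub_eq_zero, ← Preadditive.comp_sub] at hhk
  rw [← sub_eq_zero]
  refine (isSeparator_def G).1 hG _ 0 (fun g => ?_)
  simp only [comp_zero]
  have hg : (g ≫ S.iCycles) ≫ X.d n (n - 1) = 0 := by
    erw [Category.assoc]
    change g ≫ (S.iCycles ≫ S.g) = 0
    rw [S.iCycles_g, comp_zero]
  obtain ⟨ℓ, hℓ⟩ := hext n (g ≫ S.iCycles) hg
  have hlift : ℓ ≫ S.toCycles = g := by
    have : (ℓ ≫ S.toCycles) ≫ S.iCycles = g ≫ S.iCycles := by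
      erw [Category.assoc, S.toCycles_i]; exact hℓ
    exact (cancel_mono S.iCycles).1 this
  rw [← hlift]
  erw [Category.assoc, hhk, comp_zero]
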